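/- arXiv:1706.09784 — 2 statements merged into one kernel-verified Lean document; each statement's English description precedes it below -/
import Mathlib

section
/- Let (h₁,h₂) ∈ M(D²) with h₁(z) = -z₁ + Σ_{|α|≥2} c_α z^α. Then the map (z₁,z₂) ↦ (-z₁ + c_{(0,2)} z₂², h₂(z₁,z₂)) belongs to M(D²). -/
open Complex MeasureTheory Real Set

def polydisc2 : Set (ℂ × ℂ) := {z | ‖z.1‖ < 1 ∧ ‖z.2‖ < 1}

noncomputable def μ2 : Measure (ℝ × ℝ) :=
  (volume.restrict (Ioc (0:ℝ) (2*π))).prod (volume.restrict (Ioc (0:ℝ) (2*π)))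

noncomputable def Efun (d : ℤ) (p : ℝ × ℝ) : ℂ :=
  Complex.exp (((-d : ℤ) : ℂ) * I * (p.1 : ℝ)) * Complex.exp (((2*d : ℤ) : ℂ) * I * (p.2 : ℝ))

noncomputable def zpt (r : ℝ) (p : ℝ × ℝ) : ℂ × ℂ :=
  ((r:ℂ) * Complex.exp ((p.1:ℝ) * I), (r:ℂ) * Complex.exp ((p.2:ℝ) * I))

noncomputable def Gfun (h : ℂ × ℂ → ℂ × ℂ) (r : ℝ) (p : ℝ × ℝ) : ℂ :=
  -((h (zpt r p)).1 / ((r:ℂ) * Complex.exp ((p.1:ℝ) * I)))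

noncomputable def Ffun (c : ℕ × ℕ → ℂ) (r : ℝ) (α : ℕ × ℕ) (d : ℤ) (p : ℝ × ℝ) : ℂ :=
  -(c α * ((r:ℂ) * Complex.exp ((p.1:ℝ) * I)) ^ α.1 * ((r:ℂ) * Complex.exp ((p.2:ℝ) * I)) ^ α.2
      / ((r:ℂ) * Complex.exp ((p.1:ℝ) * I))) * Efun d p

lemma abs_z1 {r : ℝ} (hr0 : 0 < r) (x : ℝ) :
    ‖(r:ℂ) * Complex.exp ((x:ℝ) * I)‖ = r := by
  rw [norm_mul, Complex.norm_real, Real.norm_eq_abs, Complex.norm_exp_ofReal_mul_I, mul_one, abs_of_pos hr0]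

lemma zpt_mem {r : ℝ} (hr0 : 0 < r) (hr1 : r < 1) (p : ℝ × ℝ) : zpt r p ∈ polydisc2 := by
  constructor <;> simp only [zpt] <;> rw [abs_z1 hr0] <;> exact hr1

lemma zpt_ne {r : ℝ} (hr0 : 0 < r) (x : ℝ) : (r:ℂ) * Complex.exp ((x:ℝ) * I) ≠ 0 := by
  apply mul_ne_zero _ (Complex.exp_ne_zero _)
  simpa using hr0.ne'

lemma Efun_mul (a b : ℤ) (p : ℝ × ℝ) : Efun a p * Efun b p = Efun (a+b) p := by
  unfold Efun
  rw [mul_mul_mul_comm, ← Complex.exp_add, ← Complex.exp_add]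
  congr 2 <;> push_cast <;> ring

lemma conj_Efun (d : ℤ) (p : ℝ × ℝ) : (starRingEnd ℂ) (Efun d p) = Efun (-d) p := by
  unfold Efun
  rw [map_mul]
  congr 1 <;> rw [← Complex.exp_conj] <;> congr 1 <;>
    simp only [map_mul, Complex.conj_I, Complex.conj_ofReal, map_intCast] <;> push_cast <;> ring

lemma abs_Efun (d : ℤ) (p : ℝ × ℝ) : ‖Efun d p‖ = 1 := by
  unfold Efun
  rw [norm_mul]
  rw [show ((-d : ℤ) : ℂ) * I * (p.1 : ℝ) = ((((-d : ℤ) * p.1 : ℝ)) : ℂ) * I by push_cast; ring]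
  rw [show ((2*d : ℤ) : ℂ) * I * (p.2 : ℝ) = ((((2*d : ℤ) * p.2 : ℝ)) : ℂ) * I by push_cast; ring]
  rw [Complex.norm_exp_ofReal_mul_I, Complex.norm_exp_ofReal_mul_I, one_mul]

lemma μ2_univ : (μ2 Set.univ).toReal = (2*π)*(2*π) := by
  have hπ : (0:ℝ) ≤ 2*π := by positivity
  rw [μ2, ← Set.univ_prod_univ, Measure.prod_prod]
  simp [Real.volume_Ioc, ENNReal.toReal_mul, ENNReal.toReal_ofReal hπ, ENNReal.toReal_ofReal Real.pi_pos.le]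

instance : IsFiniteMeasure μ2 := by
  constructor
  rw [μ2, ← Set.univ_prod_univ, Measure.prod_prod]
  simp [Real.volume_Ioc]
  exact ENNReal.mul_lt_top (by finiteness) (by finiteness)

lemma μ2_eq_restrict : μ2 = (volume : Measure (ℝ×ℝ)).restrict ((Ioc (0:ℝ) (2*π)) ×ˢ (Ioc (0:ℝ) (2*π))) := by
  rw [μ2, Measure.prod_restrict, ← Measure.volume_eq_prod]

lemma exp_two_pi (m : ℤ) : Complex.exp ((m*I) * (2*π:ℝ)) = 1 := by
  rw [show ((m:ℂ)*I) * (2*π:ℝ) = m * (2*π*I) by push_cast; ring]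
  exact Complex.exp_int_mul_two_pi_mul_I m

lemma exp_int_int (m : ℤ) :
    (∫ θ in (0:ℝ)..(2*π), Complex.exp ((m:ℂ) * I * θ)) = if m = 0 then (2*π:ℂ) else 0 := by
  rcases eq_or_ne m 0 with hm | hm
  · simp [hm]
  · rw [if_neg hm]
    rw [integral_exp_mul_complex (by simp [Complex.I_ne_zero, hm])]
    rw [exp_two_pi m]
    simp

lemma exp_int_int' (m : ℤ) :
    (∫ θ in Set.Ioc (0:ℝ) (2*π), Complex.exp ((m:ℂ) * I * θ)) = if m = 0 then (2*π:ℂ) else 0 := by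
  rw [← intervalIntegral.integral_of_le (by positivity), exp_int_int]

lemma term_int (C : ℂ) (m k : ℤ) :
    (∫ p, C * Complex.exp ((m:ℂ) * I * (p.1:ℝ)) * Complex.exp ((k:ℂ) * I * (p.2:ℝ)) ∂μ2)
      = C * (if m = 0 then (2*π:ℂ) else 0) * (if k = 0 then (2*π:ℂ) else 0) := by
  have hpm := MeasureTheory.integral_prod_mul (μ := volume.restrict (Ioc (0:ℝ) (2*π)))
      (ν := volume.restrict (Ioc (0:ℝ) (2*π)))
      (fun θ : ℝ => C * Complex.exp ((m:ℂ)*I*θ)) (fun φ : ℝ => Complex.exp ((k:ℂ)*I*φ))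
  rw [μ2, hpm, MeasureTheory.integral_const_mul, exp_int_int', exp_int_int']

lemma hasSum_F (h : ℂ × ℂ → ℂ × ℂ) (c : ℕ × ℕ → ℂ)
    (hc : ∀ z ∈ polydisc2, HasSum (fun α : ℕ × ℕ => c α * z.1 ^ α.1 * z.2 ^ α.2) ((h z).1))
    {r : ℝ} (hr0 : 0 < r) (hr1 : r < 1) (d : ℤ) (p : ℝ × ℝ) :
    HasSum (fun α => Ffun c r α d p) (Gfun h r p * Efun d p) :=
  (((hc (zpt r p) (zpt_mem hr0 hr1 p)).div_const _).neg).mul_right (Efun d p)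

lemma Ffun_eq (c : ℕ × ℕ → ℂ) {r : ℝ} (hr0 : 0 < r) (α : ℕ × ℕ) (d : ℤ) (p : ℝ × ℝ) :
    Ffun c r α d p = (-(c α) * (r:ℂ)^α.1 * (r:ℂ)^α.2 / r) *
      Complex.exp ((((α.1:ℤ) - 1 - d : ℤ):ℂ) * I * (p.1:ℝ)) *
      Complex.exp ((((α.2:ℤ) + 2*d : ℤ):ℂ) * I * (p.2:ℝ)) := by
  have hrne : (r:ℂ) ≠ 0 := by simpa using hr0.ne'
  have hex1 : Complex.exp ((p.1:ℝ) * I) ≠ 0 := Complex.exp_ne_zero _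
  have hex2 : Complex.exp ((p.2:ℝ) * I) ≠ 0 := Complex.exp_ne_zero _
  have h1 : ((r:ℂ) * Complex.exp ((p.1:ℝ) * I)) ^ α.1
      = (r:ℂ)^α.1 * Complex.exp ((α.1:ℂ) * ((p.1:ℝ) * I)) := by
    rw [mul_pow, Complex.exp_nat_mul]
  have h2 : ((r:ℂ) * Complex.exp ((p.2:ℝ) * I)) ^ α.2
      = (r:ℂ)^α.2 * Complex.exp ((α.2:ℂ) * ((p.2:ℝ) * I)) := by
    rw [mul_pow, Complex.exp_nat_mul]
  have e1 : Complex.exp ((((α.1:ℤ) - 1 - d : ℤ):ℂ) * I * (p.1:ℝ))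
      = Complex.exp ((α.1:ℂ) * ((p.1:ℝ) * I)) * (Complex.exp ((p.1:ℝ) * I))⁻¹ *
        Complex.exp (((-d : ℤ):ℂ) * I * (p.1:ℝ)) := by
    rw [← Complex.exp_neg, ← Complex.exp_add, ← Complex.exp_add]
    congr 1; push_cast; ring
  have e2 : Complex.exp ((((α.2:ℤ) + 2*d : ℤ):ℂ) * I * (p.2:ℝ))
      = Complex.exp ((α.2:ℂ) * ((p.2:ℝ) * I)) * Complex.exp (((2*d : ℤ):ℂ) * I * (p.2:ℝ)) := by
    rw [← Complex.exp_add]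
    congr 1; push_cast; ring
  unfold Ffun Efun
  rw [h1, h2, e1, e2]
  field_simp

lemma norm_Ffun (c : ℕ × ℕ → ℂ) {r : ℝ} (hr0 : 0 < r) (α : ℕ × ℕ) (d : ℤ) (p : ℝ × ℝ) :
    ‖Ffun c r α d p‖ = ‖c α‖ * r^α.1 * r^α.2 / r := by
  have habs : ‖Efun d p‖ = 1 := by
    unfold Efun
    rw [norm_mul]
    rw [show ((-d : ℤ) : ℂ) * I * (p.1 : ℝ) = ((((-d : ℤ) * p.1 : ℝ)) : ℂ) * I by push_cast; ring]
    rw [show ((2*d : ℤ) : ℂ) * I * (p.2 : ℝ) = ((((2*d : ℤ) * p.2 : ℝ)) : ℂ) * I by push_cast; ring]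
    rw [Complex.norm_exp_ofReal_mul_I, Complex.norm_exp_ofReal_mul_I, one_mul]
  unfold Ffun
  rw [norm_mul, habs, mul_one, norm_neg, norm_div, norm_mul, norm_mul,
    norm_pow, norm_pow, abs_z1 hr0, abs_z1 hr0]

lemma cont_Ffun (c : ℕ × ℕ → ℂ) {r : ℝ} (hr0 : 0 < r) (α : ℕ × ℕ) (d : ℤ) :
    Continuous (Ffun c r α d) := by
  have hz : ∀ (f : ℝ × ℝ → ℝ), Continuous f →
      Continuous (fun p : ℝ × ℝ => (r:ℂ) * Complex.exp ((f p : ℝ) * I)) := fun f hf =>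
    continuous_const.mul (Complex.continuous_exp.comp
      ((Complex.continuous_ofReal.comp hf).mul continuous_const))
  have hE : Continuous (Efun d) := by
    unfold Efun
    exact (Complex.continuous_exp.comp (continuous_const.mul
        (Complex.continuous_ofReal.comp continuous_fst))).mul
      (Complex.continuous_exp.comp (continuous_const.mul
        (Complex.continuous_ofReal.comp continuous_snd)))
  unfold Efun at hE
  unfold Ffun
  exact ((((continuous_const.mul ((hz _ continuous_fst).pow α.1)).mul
      ((hz _ continuous_snd).pow α.2)).div (hz _ continuous_fst)
      (fun p => zpt_ne hr0 p.1)).neg.mul hE)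

lemma integrable_Ffun (c : ℕ × ℕ → ℂ) {r : ℝ} (hr0 : 0 < r) (α : ℕ × ℕ) (d : ℤ) :
    Integrable (Ffun c r α d) μ2 := by
  refine (integrable_const (‖c α‖ * r^α.1 * r^α.2 / r)).mono'
    (cont_Ffun c hr0 α d).aestronglyMeasurable (ae_of_all _ fun p => le_of_eq (norm_Ffun c hr0 α d p))

lemma int_norm_Ffun (c : ℕ × ℕ → ℂ) {r : ℝ} (hr0 : 0 < r) (α : ℕ × ℕ) (d : ℤ) :
    ∫ p, ‖Ffun c r α d p‖ ∂μ2
      = (‖c α‖ * r^α.1 * r^α.2 / r) * ((2*π)*(2*π)) := by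
  simp_rw [norm_Ffun c hr0 α d]
  rw [integral_const, measureReal_def, μ2_univ, smul_eq_mul, mul_comm]

lemma summable_base (h : ℂ × ℂ → ℂ × ℂ) (c : ℕ × ℕ → ℂ)
    (hc : ∀ z ∈ polydisc2, HasSum (fun α : ℕ × ℕ => c α * z.1 ^ α.1 * z.2 ^ α.2) ((h z).1))
    {r : ℝ} (hr0 : 0 < r) (hr1 : r < 1) :
    Summable (fun α : ℕ × ℕ => ‖c α‖ * r^α.1 * r^α.2) := by
  have hmem : ((r:ℂ), (r:ℂ)) ∈ polydisc2 := by
    constructor <;> simp [Complex.norm_real, abs_of_pos hr0, hr1]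
  have hs := (hc ((r:ℂ),(r:ℂ)) hmem).summable
  refine (summable_norm_iff.mpr hs).congr fun α => ?_
  simp [norm_mul, norm_pow, Complex.norm_real, abs_of_pos hr0]

lemma summable_int_norm (h : ℂ × ℂ → ℂ × ℂ) (c : ℕ × ℕ → ℂ)
    (hc : ∀ z ∈ polydisc2, HasSum (fun α : ℕ × ℕ => c α * z.1 ^ α.1 * z.2 ^ α.2) ((h z).1))
    {r : ℝ} (hr0 : 0 < r) (hr1 : r < 1) (d : ℤ) :
    Summable (fun α : ℕ × ℕ => ∫ p, ‖Ffun c r α d p‖ ∂μ2) := by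
  refine (((summable_base h c hc hr0 hr1).div_const r).mul_right ((2*π)*(2*π))).congr fun α => ?_
  rw [int_norm_Ffun c hr0 α d]

noncomputable def Kc : ℂ := (2*π:ℂ) * (2*π:ℂ)

lemma Jint_eq (h : ℂ × ℂ → ℂ × ℂ) (c : ℕ × ℕ → ℂ)
    (hc : ∀ z ∈ polydisc2, HasSum (fun α : ℕ × ℕ => c α * z.1 ^ α.1 * z.2 ^ α.2) ((h z).1))
    (h10 : c (1, 0) = -1) {r : ℝ} (hr0 : 0 < r) (hr1 : r < 1) (d : ℤ) :
    ∫ p, Gfun h r p * Efun d p ∂μ2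
      = if d = 0 then Kc else if d = -1 then Kc * (-(c (0,2)) * (r:ℂ)) else 0 := by
  have hrne : (r:ℂ) ≠ 0 := by simpa using hr0.ne'
  have hint := hasSum_integral_of_summable_integral_norm (μ := μ2)
    (F := fun (α : ℕ×ℕ) (p : ℝ×ℝ) => Ffun c r α d p) (fun α => integrable_Ffun c hr0 α d)
    (summable_int_norm h c hc hr0 hr1 d)
  have hts : ∀ p : ℝ×ℝ, (∑' α : ℕ×ℕ, Ffun c r α d p) = Gfun h r p * Efun d p :=
    fun p => (hasSum_F h c hc hr0 hr1 d p).tsum_eq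
  simp only [hts] at hint
  rw [← hint.tsum_eq]
  have hterm : ∀ α : ℕ×ℕ, (∫ p, Ffun c r α d p ∂μ2)
      = (-(c α) * (r:ℂ)^α.1 * (r:ℂ)^α.2 / r)
        * (if ((α.1:ℤ) - 1 - d) = 0 then (2*π:ℂ) else 0)
        * (if ((α.2:ℤ) + 2*d) = 0 then (2*π:ℂ) else 0) := by
    intro α
    simp only [Ffun_eq c hr0 α d]
    exact term_int _ _ _
  rw [tsum_congr hterm]
  rcases eq_or_ne d 0 with hd | hd
  · subst hd
    rw [if_pos rfl]
    rw [tsum_eq_single ((1,0) : ℕ×ℕ) ?_]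
    · norm_num [h10, Kc]
      exact hr0.ne'
    · intro α hα
      rcases eq_or_ne ((α.1:ℤ) - 1 - 0) 0 with h1 | h1
      · rcases eq_or_ne ((α.2:ℤ) + 2*0) 0 with h2 | h2
        · exfalso
          apply hα
          have e1 : α.1 = 1 := by omega
          have e2 : α.2 = 0 := by omega
          exact Prod.ext e1 e2
        · rw [if_neg h2, mul_zero]
      · rw [if_neg h1, mul_zero, zero_mul]
  rcases eq_or_ne d (-1) with hd1 | hd1
  · subst hd1
    rw [if_neg hd, if_pos rfl]
    rw [tsum_eq_single ((0,2) : ℕ×ℕ) ?_]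
    · norm_num [Kc]
      field_simp
    · intro α hα
      rcases eq_or_ne ((α.1:ℤ) - 1 - (-1)) 0 with h1 | h1
      · rcases eq_or_ne ((α.2:ℤ) + 2*(-1)) 0 with h2 | h2
        · exfalso
          apply hα
          have e1 : α.1 = 0 := by omega
          have e2 : α.2 = 2 := by omega
          exact Prod.ext e1 e2
        · rw [if_neg h2, mul_zero]
      · rw [if_neg h1, mul_zero, zero_mul]
  · rw [if_neg hd, if_neg hd1]
    have hz : ∀ α : ℕ×ℕ, (-(c α) * (r:ℂ)^α.1 * (r:ℂ)^α.2 / r)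
        * (if ((α.1:ℤ) - 1 - d) = 0 then (2*π:ℂ) else 0)
        * (if ((α.2:ℤ) + 2*d) = 0 then (2*π:ℂ) else 0) = 0 := by
      intro α
      rcases eq_or_ne ((α.1:ℤ) - 1 - d) 0 with h1 | h1
      · rcases eq_or_ne ((α.2:ℤ) + 2*d) 0 with h2 | h2
        · exfalso; omega
        · rw [if_neg h2, mul_zero]
      · rw [if_neg h1, mul_zero, zero_mul]
    rw [tsum_congr hz, tsum_zero]

lemma cont_Efun (d : ℤ) : Continuous (Efun d) := by
  unfold Efun
  exact (Complex.continuous_exp.comp (continuous_const.mul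
      (Complex.continuous_ofReal.comp continuous_fst))).mul
    (Complex.continuous_exp.comp (continuous_const.mul
      (Complex.continuous_ofReal.comp continuous_snd)))

lemma cont_G (h : ℂ × ℂ → ℂ × ℂ) (hd : DifferentiableOn ℂ h polydisc2)
    {r : ℝ} (hr0 : 0 < r) (hr1 : r < 1) : Continuous (Gfun h r) := by
  have hz : Continuous (zpt r) := by
    unfold zpt
    exact (continuous_const.mul (Complex.continuous_exp.comp
        ((Complex.continuous_ofReal.comp continuous_fst).mul continuous_const))).prodMk
      (continuous_const.mul (Complex.continuous_exp.comp
        ((Complex.continuous_ofReal.comp continuous_snd).mul continuous_const)))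
  have hh : Continuous fun p => h (zpt r p) :=
    (hd.continuousOn).comp_continuous hz (fun p => zpt_mem hr0 hr1 p)
  unfold Gfun
  exact ((hh.fst).div (continuous_const.mul (Complex.continuous_exp.comp
      ((Complex.continuous_ofReal.comp continuous_fst).mul continuous_const)))
    (fun p => zpt_ne hr0 p.1)).neg

lemma integrable_GE (h : ℂ × ℂ → ℂ × ℂ) (hd : DifferentiableOn ℂ h polydisc2)
    {r : ℝ} (hr0 : 0 < r) (hr1 : r < 1) (d : ℤ) :
    Integrable (fun p => Gfun h r p * Efun d p) μ2 := by
  rw [μ2_eq_restrict]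
  have hcont : Continuous fun p => Gfun h r p * Efun d p :=
    (cont_G h hd hr0 hr1).mul (cont_Efun d)
  exact (hcont.continuousOn.integrableOn_compact
    (isCompact_Icc.prod isCompact_Icc)).mono_set
    (Set.prod_mono Set.Ioc_subset_Icc_self Set.Ioc_subset_Icc_self)

lemma key_bound (h : ℂ × ℂ → ℂ × ℂ) (c : ℕ × ℕ → ℂ)
    (hd : DifferentiableOn ℂ h polydisc2)
    (hc : ∀ z ∈ polydisc2, HasSum (fun α : ℕ × ℕ => c α * z.1 ^ α.1 * z.2 ^ α.2) ((h z).1))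
    (hre : ∀ z ∈ polydisc2, z.1 ≠ 0 → ‖z.2‖ ≤ ‖z.1‖ → ((h z).1 / z.1).re ≤ 0)
    (h10 : c (1, 0) = -1) {r : ℝ} (hr0 : 0 < r) (hr1 : r < 1) :
    ‖c (0,2)‖ * r ≤ 1 := by
  have hrne : (r:ℂ) ≠ 0 := by simpa using hr0.ne'
  set b : ℂ := -(c (0,2)) * (r:ℂ) with hb
  have habsb : ‖b‖ = ‖c (0,2)‖ * r := by
    rw [hb, norm_mul, norm_neg, Complex.norm_real, Real.norm_eq_abs, abs_of_pos hr0]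
  by_cases hb0 : b = 0
  · rw [← habsb, hb0]
    simp
  -- choose the unimodular ω
  set ω : ℂ := -b / (‖b‖ : ℂ) with hω
  have habne : ((‖b‖ : ℝ) : ℂ) ≠ 0 := by
    simpa using (norm_ne_zero_iff.mpr hb0)
  have hcc : b * (starRingEnd ℂ) b = ((‖b‖ : ℝ) : ℂ) * ((‖b‖ : ℝ) : ℂ) := by
    rw [Complex.mul_conj, ← Complex.ofReal_mul]
    congr 1
    rw [← Complex.sq_norm, sq]
  have hωu : ω * (starRingEnd ℂ) ω = 1 := by
    rw [hω, map_div₀, map_neg, Complex.conj_ofReal, div_mul_div_comm, neg_mul_neg, hcc,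
      div_self (mul_ne_zero habne habne)]
  have hbω : b * (starRingEnd ℂ) ω = -((‖b‖ : ℝ) : ℂ) := by
    rw [hω, map_div₀, map_neg, Complex.conj_ofReal]
    rw [show b * (-(starRingEnd ℂ) b / ((‖b‖ : ℝ):ℂ))
        = -((b * (starRingEnd ℂ) b) / ((‖b‖ : ℝ):ℂ)) by ring, hcc]
    rw [mul_div_assoc, div_self habne, mul_one]
  -- main inequality for each n
  have hn : ∀ n : ℕ, 2 ≤ n → ((n:ℝ) - 1) * ‖b‖ ≤ n := by
    intro n hn2
    set Q : ℝ × ℝ → ℂ := fun p => ∑ j ∈ Finset.range n, ω ^ j * Efun (j:ℤ) p with hQ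
    have hconjQ : ∀ p, (starRingEnd ℂ) (Q p)
        = ∑ k ∈ Finset.range n, ((starRingEnd ℂ) ω) ^ k * Efun (-(k:ℤ)) p := by
      intro p
      rw [hQ, map_sum]
      exact Finset.sum_congr rfl fun k _ => by rw [map_mul, map_pow, conj_Efun]
    have hexp : ∀ p, Gfun h r p * (Q p * (starRingEnd ℂ) (Q p))
        = ∑ j ∈ Finset.range n, ∑ k ∈ Finset.range n,
            (ω ^ j * ((starRingEnd ℂ) ω) ^ k) * (Gfun h r p * Efun ((j:ℤ) - (k:ℤ)) p) := by
      intro p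
      rw [hconjQ p, hQ]
      rw [Finset.sum_mul_sum]
      simp only [Finset.mul_sum]
      refine Finset.sum_congr rfl fun j _ => Finset.sum_congr rfl fun k _ => ?_
      rw [show ((j:ℤ) - (k:ℤ)) = (j:ℤ) + (-(k:ℤ)) by ring, ← Efun_mul]
      ring
    have hintGE : ∀ d : ℤ, Integrable (fun p => Gfun h r p * Efun d p) μ2 :=
      integrable_GE h hd hr0 hr1
    have hInt : Integrable (fun p => Gfun h r p * (Q p * (starRingEnd ℂ) (Q p))) μ2 := by
      rw [show (fun p => Gfun h r p * (Q p * (starRingEnd ℂ) (Q p)))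
          = fun p => ∑ j ∈ Finset.range n, ∑ k ∈ Finset.range n,
              (ω ^ j * ((starRingEnd ℂ) ω) ^ k) * (Gfun h r p * Efun ((j:ℤ) - (k:ℤ)) p)
          from funext hexp]
      exact integrable_finset_sum _ fun j _ =>
        integrable_finset_sum _ fun k _ => (hintGE _).const_mul _
    -- positivity of the integral
    have hpos : 0 ≤ (∫ p, Gfun h r p * (Q p * (starRingEnd ℂ) (Q p)) ∂μ2).re := by
      have hre2 := integral_re (μ := μ2) hInt
      rw [RCLike.re_eq_complex_re] at hre2
      rw [← hre2]
      refine integral_nonneg fun p => ?_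
      have hmem := zpt_mem hr0 hr1 p
      have hne : (zpt r p).1 ≠ 0 := zpt_ne hr0 p.1
      have hle : ‖(zpt r p).2‖ ≤ ‖(zpt r p).1‖ := by
        unfold zpt
        rw [abs_z1 hr0, abs_z1 hr0]
      have hGre : 0 ≤ (Gfun h r p).re := by
        have := hre (zpt r p) hmem hne hle
        unfold Gfun
        rw [Complex.neg_re]
        simpa [zpt] using this
      rw [Complex.mul_conj]
      simp only [Complex.mul_re, Complex.ofReal_re, Complex.ofReal_im, mul_zero, sub_zero]
      exact mul_nonneg hGre (Complex.normSq_nonneg _)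
    -- compute the integral
    have hval : (∫ p, Gfun h r p * (Q p * (starRingEnd ℂ) (Q p)) ∂μ2)
        = ∑ j ∈ Finset.range n, ∑ k ∈ Finset.range n,
            (ω ^ j * ((starRingEnd ℂ) ω) ^ k) *
              (if ((j:ℤ) - (k:ℤ)) = 0 then Kc
               else if ((j:ℤ) - (k:ℤ)) = -1 then Kc * b else 0) := by
      rw [show (fun p => Gfun h r p * (Q p * (starRingEnd ℂ) (Q p)))
          = fun p => ∑ j ∈ Finset.range n, ∑ k ∈ Finset.range n,
              (ω ^ j * ((starRingEnd ℂ) ω) ^ k) * (Gfun h r p * Efun ((j:ℤ) - (k:ℤ)) p)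
          from funext hexp]
      rw [integral_finset_sum _ fun j _ =>
        integrable_finset_sum _ fun k _ => (hintGE _).const_mul _]
      refine Finset.sum_congr rfl fun j _ => ?_
      rw [integral_finset_sum _ fun k _ => (hintGE _).const_mul _]
      refine Finset.sum_congr rfl fun k _ => ?_
      rw [MeasureTheory.integral_const_mul, Jint_eq h c hc h10 hr0 hr1, hb]
    -- evaluate the double sum
    have hsum : ∑ j ∈ Finset.range n, ∑ k ∈ Finset.range n,
            (ω ^ j * ((starRingEnd ℂ) ω) ^ k) *
              (if ((j:ℤ) - (k:ℤ)) = 0 then Kc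
               else if ((j:ℤ) - (k:ℤ)) = -1 then Kc * b else 0)
        = (n:ℂ) * Kc + ((n:ℂ) - 1) * (Kc * (b * (starRingEnd ℂ) ω)) := by
      have hinner : ∀ j ∈ Finset.range n, ∑ k ∈ Finset.range n,
            (ω ^ j * ((starRingEnd ℂ) ω) ^ k) *
              (if ((j:ℤ) - (k:ℤ)) = 0 then Kc
               else if ((j:ℤ) - (k:ℤ)) = -1 then Kc * b else 0)
          = Kc + (if j + 1 < n then Kc * (b * (starRingEnd ℂ) ω) else 0) := by
        intro j hj
        have hterm : ∀ k : ℕ, (ω ^ j * ((starRingEnd ℂ) ω) ^ k) *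
              (if ((j:ℤ) - (k:ℤ)) = 0 then Kc
               else if ((j:ℤ) - (k:ℤ)) = -1 then Kc * b else 0)
            = (if k = j then Kc else 0)
              + (if k = j + 1 then Kc * (b * (starRingEnd ℂ) ω) else 0) := by
          intro k
          rcases eq_or_ne k j with hk | hk
          · subst hk
            simp only [sub_self]
            norm_num
            rw [← mul_pow, hωu, one_pow, one_mul]
          rcases eq_or_ne k (j+1) with hk1 | hk1
          · subst hk1
            have hωj : ω ^ j * ((starRingEnd ℂ) ω) ^ (j+1) = (starRingEnd ℂ) ω := by
              rw [pow_succ, ← mul_assoc, ← mul_pow, hωu, one_pow, one_mul]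
            simp only [show ((j:ℤ) - ((j+1 : ℕ):ℤ)) = -1 from by push_cast; ring, if_true]
            rw [if_neg (show ¬(-1:ℤ) = 0 from by norm_num), if_neg hk, zero_add, hωj]
            ring
          · rw [if_neg (by omega), if_neg (by omega), if_neg hk, if_neg hk1, mul_zero, add_zero]
        rw [Finset.sum_congr rfl fun k _ => hterm k, Finset.sum_add_distrib]
        rw [Finset.sum_ite_eq' (Finset.range n) j fun _ => Kc, if_pos hj]
        rw [Finset.sum_ite_eq' (Finset.range n) (j+1) fun _ => Kc * (b * (starRingEnd ℂ) ω)]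
        simp only [Finset.mem_range]
      rw [Finset.sum_congr rfl hinner, Finset.sum_add_distrib, Finset.sum_const,
        Finset.card_range]
      have hcount : ∑ j ∈ Finset.range n, (if j + 1 < n then Kc * (b * (starRingEnd ℂ) ω) else 0)
          = ((n:ℂ) - 1) * (Kc * (b * (starRingEnd ℂ) ω)) := by
        have : ∀ j : ℕ, (if j + 1 < n then Kc * (b * (starRingEnd ℂ) ω) else 0)
            = (if j ∈ Finset.range (n-1) then Kc * (b * (starRingEnd ℂ) ω) else 0) := by
          intro j
          by_cases hjn : j + 1 < n
          · rw [if_pos hjn, if_pos (Finset.mem_range.mpr (by omega))]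
          · rw [if_neg hjn, if_neg (fun hmem => hjn (by
              have := Finset.mem_range.mp hmem
              omega))]
        rw [Finset.sum_congr rfl fun j _ => this j, Finset.sum_ite_mem]
        have hir : Finset.range n ∩ Finset.range (n-1) = Finset.range (n-1) :=
          Finset.inter_eq_right.mpr (Finset.range_subset_range.mpr (by omega))
        rw [hir, Finset.sum_const, Finset.card_range, nsmul_eq_mul]
        congr 1
        have : ((n - 1 : ℕ) : ℂ) = (n:ℂ) - 1 := by
          push_cast [Nat.cast_sub (by omega : 1 ≤ n)]
          ring
        rw [this]
      rw [hcount, nsmul_eq_mul]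
    -- combine
    have hfin := hpos
    rw [hval, hsum, hbω] at hfin
    have hKc : ((n:ℂ) * Kc + ((n:ℂ) - 1) * (Kc * -((‖b‖ : ℝ) : ℂ)))
        = ((((n:ℝ) - ((n:ℝ)-1) * ‖b‖) * ((2*π)*(2*π)) : ℝ) : ℂ) := by
      rw [Kc]
      push_cast
      ring
    rw [hKc, Complex.ofReal_re] at hfin
    have hπ : 0 < (2*π)*(2*π) := by positivity
    nlinarith [hfin, hπ]
  -- conclude from the family of inequalities
  rw [← habsb]
  by_contra hgt
  push_neg at hgt
  set t := ‖b‖ with ht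
  have ht1 : 1 < t := hgt
  obtain ⟨n, hnt⟩ := exists_nat_gt (t/(t-1) + 2)
  have h3 : 0 < t - 1 := by linarith
  have h2n : (2:ℝ) < (n:ℝ) := by
    have hq : 0 < t / (t-1) := by positivity
    linarith
  have hn2 : 2 ≤ n := by exact_mod_cast h2n.le
  have hineq := hn n hn2
  have h4 : t / (t-1) * (t-1) = t := div_mul_cancel₀ _ h3.ne'
  have h5 := mul_lt_mul_of_pos_right hnt h3
  nlinarith [hineq, h5, h4, h3]

lemma abs_c02_le_one (h : ℂ × ℂ → ℂ × ℂ) (c : ℕ × ℕ → ℂ)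
    (hd : DifferentiableOn ℂ h polydisc2)
    (hc : ∀ z ∈ polydisc2, HasSum (fun α : ℕ × ℕ => c α * z.1 ^ α.1 * z.2 ^ α.2) ((h z).1))
    (hre : ∀ z ∈ polydisc2, z.1 ≠ 0 → ‖z.2‖ ≤ ‖z.1‖ → ((h z).1 / z.1).re ≤ 0)
    (h10 : c (1, 0) = -1) : ‖c (0,2)‖ ≤ 1 := by
  by_contra hgt
  push_neg at hgt
  set A := ‖c (0,2)‖ with hA
  have hA0 : 0 < A := by linarith
  have hAinv : A⁻¹ < 1 := by
    rw [inv_lt_one_iff₀]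
    right
    exact hgt
  set r : ℝ := (1 + A⁻¹)/2 with hr
  have hr0 : 0 < r := by
    have : 0 < A⁻¹ := by positivity
    rw [hr]; linarith
  have hr1 : r < 1 := by rw [hr]; linarith
  have hkey := key_bound h c hd hc hre h10 hr0 hr1
  have : A * r = (A + 1)/2 := by
    rw [hr]
    field_simp
  rw [this] at hkey
  linarith

/-- The class `M(D²)` of infinitesimal generators on the unit polydisc in `ℂ²`. -/
def memM2 (h : ℂ × ℂ → ℂ × ℂ) : Prop :=
  DifferentiableOn ℂ h polydisc2 ∧ h 0 = 0 ∧
    fderiv ℂ h 0 = -ContinuousLinearMap.id ℂ (ℂ × ℂ) ∧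
    (∀ z ∈ polydisc2, z.1 ≠ 0 → ‖z.2‖ ≤ ‖z.1‖ → ((h z).1 / z.1).re ≤ 0) ∧
    (∀ z ∈ polydisc2, z.2 ≠ 0 → ‖z.1‖ ≤ ‖z.2‖ → ((h z).2 / z.2).re ≤ 0)

lemma polydisc2_open : IsOpen polydisc2 :=
  IsOpen.and (isOpen_lt (continuous_norm.comp continuous_fst) continuous_const)
    (isOpen_lt (continuous_norm.comp continuous_snd) continuous_const)

/-- For `h = (h₁,h₂) ∈ M(D²)` with `h₁(z) = -z₁ + Σ_{|α|≥2} c_α z^α`, the map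
`(z₁,z₂) ↦ (-z₁ + c_{(0,2)} z₂², h₂(z))` again belongs to `M(D²)`. -/
theorem shearing_z2sq (h : ℂ × ℂ → ℂ × ℂ) (hM : memM2 h) (c : ℕ × ℕ → ℂ)
    (hc : ∀ z ∈ polydisc2, HasSum (fun α : ℕ × ℕ => c α * z.1 ^ α.1 * z.2 ^ α.2) ((h z).1))
    (h00 : c (0, 0) = 0) (h10 : c (1, 0) = -1) (h01 : c (0, 1) = 0) :
    memM2 (fun z : ℂ × ℂ => (-z.1 + c (0, 2) * z.2 ^ 2, (h z).2)) := by
  obtain ⟨hdiff, hval, hfder, hre1, hre2⟩ := hM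
  have habs : ‖c (0,2)‖ ≤ 1 := abs_c02_le_one h c hdiff hc hre1 h10
  have h0mem : (0 : ℂ × ℂ) ∈ polydisc2 := by constructor <;> simp
  refine ⟨?_, ?_, ?_, ?_, ?_⟩
  · apply DifferentiableOn.prodMk
    · exact (differentiable_fst.neg.add
        ((differentiable_snd.pow 2).const_mul (c (0,2)))).differentiableOn
    · exact hdiff.snd
  · have h2 : (h 0).2 = 0 := by simp [hval]
    simp [Prod.ext_iff, h2]
  · have hdAt : DifferentiableAt ℂ h 0 := hdiff.differentiableAt (polydisc2_open.mem_nhds h0mem)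
    have hH : HasFDerivAt h (-ContinuousLinearMap.id ℂ (ℂ × ℂ)) 0 := hfder ▸ hdAt.hasFDerivAt
    have h2 : HasFDerivAt (fun z : ℂ × ℂ => (h z).2)
        ((ContinuousLinearMap.snd ℂ ℂ ℂ).comp (-ContinuousLinearMap.id ℂ (ℂ × ℂ))) 0 :=
      hH.snd
    have hsq : HasFDerivAt (fun z : ℂ × ℂ => z.2 * z.2)
        (((0 : ℂ × ℂ).2 • ContinuousLinearMap.snd ℂ ℂ ℂ)
          + ((0 : ℂ × ℂ).2 • ContinuousLinearMap.snd ℂ ℂ ℂ)) 0 :=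
      (hasFDerivAt_snd).mul (hasFDerivAt_snd)
    have h1 : HasFDerivAt (fun z : ℂ × ℂ => -z.1 + c (0,2) * z.2 ^ 2)
        (-(ContinuousLinearMap.fst ℂ ℂ ℂ) + c (0,2) •
          (((0 : ℂ × ℂ).2 • ContinuousLinearMap.snd ℂ ℂ ℂ)
            + ((0 : ℂ × ℂ).2 • ContinuousLinearMap.snd ℂ ℂ ℂ))) 0 := by
      have := (hasFDerivAt_fst.neg).add (hsq.const_mul (c (0,2)))
      refine this.congr_of_eventuallyEq (Filter.Eventually.of_forall fun z => ?_)
      simp only [Pi.add_apply, Pi.neg_apply]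
      ring
    have hpair := h1.prodMk h2
    rw [hpair.fderiv]
    apply ContinuousLinearMap.ext
    intro x
    simp [Prod.ext_iff]
  · intro z hz hz1 hle
    have hz2lt : ‖z.2‖ < 1 := hz.2
    have habs1 : 0 < ‖z.1‖ := by
      simpa [norm_pos_iff] using hz1
    have hsplit : (-z.1 + c (0,2) * z.2 ^ 2) / z.1 = -1 + c (0,2) * z.2 ^ 2 / z.1 := by
      rw [add_div, neg_div, div_self hz1]
    show ((-z.1 + c (0,2) * z.2 ^ 2) / z.1).re ≤ 0
    rw [hsplit, Complex.add_re, Complex.neg_re, Complex.one_re]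
    have hre_le : (c (0,2) * z.2 ^ 2 / z.1).re ≤ ‖c (0,2) * z.2 ^ 2 / z.1‖ :=
      Complex.re_le_norm _
    have habs2 : ‖c (0,2) * z.2 ^ 2 / z.1‖ ≤ ‖z.2‖ := by
      rw [norm_div, norm_mul, norm_pow]
      rw [div_le_iff₀ habs1]
      have hb1 : ‖c (0,2)‖ * ‖z.2‖ ^ 2 ≤ ‖z.2‖ ^ 2 := by
        nlinarith [norm_nonneg z.2, norm_nonneg (c (0,2))]
      have hb2 : ‖z.2‖ ^ 2 ≤ ‖z.2‖ * ‖z.1‖ := by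
        rw [sq]
        exact mul_le_mul_of_nonneg_left hle (norm_nonneg z.2)
      linarith
    linarith
  · intro z hz hz2 hle
    exact hre2 z hz hz2 hle
end

section
/- Let f : D² → C² be the map F₂(z₁,z₂) = (z₁(1+z₂)², z₂). Then f is injective and holomorphic on D² with f(0)=0, Df(0)=I₂, Df(z) is invertible for all z ∈ D², and the map z ↦ -(Df(z))⁻¹·f(z) equals H₂(z) = (-z₁(1-z₂)/(1+z₂), -z₂), which belongs to M(D²). In particular F₂ is starlike on D². -/
open Complex

/-- The derivative of `F₂` at `z`. -/
noncomputable def L2 (z : ℂ × ℂ) : (ℂ × ℂ) →L[ℂ] (ℂ × ℂ) :=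
  ((((1 + z.2) ^ 2 : ℂ) • ContinuousLinearMap.fst ℂ ℂ ℂ) +
    ((2 * z.1 * (1 + z.2)) • ContinuousLinearMap.snd ℂ ℂ ℂ)).prod (ContinuousLinearMap.snd ℂ ℂ ℂ)

/-- The inverse of the derivative of `F₂` at `z`. -/
noncomputable def L2inv (z : ℂ × ℂ) : (ℂ × ℂ) →L[ℂ] (ℂ × ℂ) :=
  ((((1 + z.2) ^ 2 : ℂ)⁻¹ • ContinuousLinearMap.fst ℂ ℂ ℂ) +
    ((-(2 * z.1) / (1 + z.2)) • ContinuousLinearMap.snd ℂ ℂ ℂ)).prod (ContinuousLinearMap.snd ℂ ℂ ℂ)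

lemma one_add_ne (w : ℂ) (hw : ‖w‖ < 1) : 1 + w ≠ 0 := by
  intro h
  have : w = -1 := by linear_combination h
  rw [this] at hw; simp at hw

lemma hasFDerivAt_F2 (z : ℂ × ℂ) :
    HasFDerivAt (fun z : ℂ × ℂ => (z.1 * (1 + z.2) ^ 2, z.2)) (L2 z) z := by
  have hb : HasFDerivAt (fun z : ℂ × ℂ => 1 + z.2) (ContinuousLinearMap.snd ℂ ℂ ℂ) z :=
    (hasFDerivAt_snd (𝕜 := ℂ) (p := z)).const_add 1
  have h1 : HasFDerivAt (fun z : ℂ × ℂ => (1 + z.2) ^ 2)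
      ((2 * (1 + z.2)) • ContinuousLinearMap.snd ℂ ℂ ℂ) z := by
    simp only [pow_two]
    refine (hb.fun_mul hb).congr_fderiv ?_
    refine ContinuousLinearMap.ext fun v => ?_
    simp
    ring
  have h2 := (hasFDerivAt_fst (𝕜 := ℂ) (p := z)).fun_mul h1
  have h3 := HasFDerivAt.prodMk h2 (hasFDerivAt_snd (𝕜 := ℂ) (p := z))
  refine h3.congr_fderiv ?_
  refine ContinuousLinearMap.ext fun v => ?_
  simp [L2, Prod.ext_iff]
  ring

lemma L2_isUnit (z : ℂ × ℂ) (hz : ‖z.2‖ < 1) : IsUnit (L2 z) := by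
  have hne := one_add_ne z.2 hz
  have h1 : L2 z * L2inv z = 1 := by
    refine ContinuousLinearMap.ext fun v => ?_
    simp [L2, L2inv, ContinuousLinearMap.mul_apply, Prod.ext_iff]
    field_simp
    ring
  have h2 : L2inv z * L2 z = 1 := by
    refine ContinuousLinearMap.ext fun v => ?_
    simp [L2, L2inv, ContinuousLinearMap.mul_apply, Prod.ext_iff]
    field_simp
    ring
  exact ⟨⟨L2 z, L2inv z, h1, h2⟩, rfl⟩

lemma H2_memM2 : memM2 (fun z : ℂ × ℂ => (-z.1 * (1 - z.2) / (1 + z.2), -z.2)) := by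
  refine ⟨?_, by simp, ?_, ?_, ?_⟩
  · intro z hz
    have hne := one_add_ne z.2 hz.2
    have d1 : DifferentiableAt ℂ (fun z : ℂ × ℂ => -z.1 * (1 - z.2) / (1 + z.2)) z := by
      simp only [div_eq_mul_inv]
      exact ((differentiableAt_fst.neg).mul
        ((differentiableAt_const (1:ℂ)).sub differentiableAt_snd)).mul
        (((differentiableAt_const (1:ℂ)).add differentiableAt_snd).inv hne)
    exact (DifferentiableAt.prodMk d1 differentiableAt_snd.neg).differentiableWithinAt
  · have hA : HasFDerivAt (fun z : ℂ × ℂ => -z.1) (-ContinuousLinearMap.fst ℂ ℂ ℂ) (0 : ℂ × ℂ) :=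
      hasFDerivAt_fst.neg
    have hB : HasFDerivAt (fun z : ℂ × ℂ => 1 - z.2) (-ContinuousLinearMap.snd ℂ ℂ ℂ) (0 : ℂ × ℂ) :=
      hasFDerivAt_snd.const_sub 1
    have hC : HasFDerivAt (fun z : ℂ × ℂ => 1 + z.2) (ContinuousLinearMap.snd ℂ ℂ ℂ) (0 : ℂ × ℂ) :=
      hasFDerivAt_snd.const_add 1
    have hinv : HasFDerivAt (fun z : ℂ × ℂ => (1 + z.2)⁻¹)
        ((-ContinuousLinearMap.mulLeftRight ℂ ℂ ((1:ℂ))⁻¹ ((1:ℂ))⁻¹).comp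
          (ContinuousLinearMap.snd ℂ ℂ ℂ)) (0 : ℂ × ℂ) := by
      have h1 : ((1:ℂ) + (0 : ℂ × ℂ).2) ≠ 0 := by simp
      have := (hasFDerivAt_inv' (𝕜 := ℂ) (R := ℂ) h1).comp (0 : ℂ × ℂ) hC
      simpa [Function.comp_def] using this
    have hmul := (hA.fun_mul hB).fun_mul hinv
    have hp := HasFDerivAt.prodMk hmul (hasFDerivAt_snd (𝕜 := ℂ) (p := (0 : ℂ × ℂ))).neg
    simp only [div_eq_mul_inv]
    rw [HasFDerivAt.fderiv (f := fun z : ℂ × ℂ => (-z.1 * (1 - z.2) * (1 + z.2)⁻¹, -z.2)) hp]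
    refine ContinuousLinearMap.ext fun v => ?_
    simp [Prod.ext_iff]
  · intro z hz h1 _
    have hne := one_add_ne z.2 hz.2
    have he : (-z.1 * (1 - z.2) / (1 + z.2)) / z.1 = -((1 - z.2) / (1 + z.2)) := by
      field_simp
    rw [he]
    have hre : ((1 - z.2) / (1 + z.2)).re = (1 - Complex.normSq z.2) / Complex.normSq (1 + z.2) := by
      rw [Complex.div_re]
      simp [Complex.normSq_apply]
      ring
    have hsq : Complex.normSq z.2 ≤ 1 := by
      rw [Complex.normSq_eq_norm_sq]
      nlinarith [norm_nonneg z.2, hz.2]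
    have hpos : 0 ≤ ((1 - z.2) / (1 + z.2)).re := by
      rw [hre]
      exact div_nonneg (by linarith) (Complex.normSq_nonneg _)
    simpa using neg_nonpos_of_nonneg hpos
  · intro z hz h2 _
    rw [neg_div, div_self h2]
    norm_num

/-- `F₂(z₁,z₂) = (z₁(1+z₂)², z₂)` is normalized, univalent and locally biholomorphic on `D²`,
and `-(DF₂(z))⁻¹·F₂(z) = (-z₁(1-z₂)/(1+z₂), -z₂) ∈ M(D²)`; hence `F₂` is starlike. -/
theorem F2_starlike :
    Set.InjOn (fun z : ℂ × ℂ => (z.1 * (1 + z.2) ^ 2, z.2)) polydisc2 ∧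
    DifferentiableOn ℂ (fun z : ℂ × ℂ => (z.1 * (1 + z.2) ^ 2, z.2)) polydisc2 ∧
    (fun z : ℂ × ℂ => (z.1 * (1 + z.2) ^ 2, z.2)) 0 = 0 ∧
    fderiv ℂ (fun z : ℂ × ℂ => (z.1 * (1 + z.2) ^ 2, z.2)) 0
      = ContinuousLinearMap.id ℂ (ℂ × ℂ) ∧
    (∀ z ∈ polydisc2, IsUnit (fderiv ℂ (fun z : ℂ × ℂ => (z.1 * (1 + z.2) ^ 2, z.2)) z)) ∧
    (∀ z ∈ polydisc2,
      fderiv ℂ (fun z : ℂ × ℂ => (z.1 * (1 + z.2) ^ 2, z.2)) z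
        ((-z.1 * (1 - z.2) / (1 + z.2), -z.2))
        = -(z.1 * (1 + z.2) ^ 2, z.2)) ∧
    memM2 (fun z : ℂ × ℂ => (-z.1 * (1 - z.2) / (1 + z.2), -z.2)) := by
  refine ⟨?_, ?_, by simp, ?_, ?_, ?_, H2_memM2⟩
  · intro z hz w hw h
    simp only [Prod.mk.injEq] at h
    obtain ⟨h1, h2⟩ := h
    have hne : ((1 : ℂ) + z.2) ^ 2 ≠ 0 := pow_ne_zero 2 (one_add_ne z.2 hz.2)
    rw [h2] at h1 hne
    exact Prod.ext (mul_right_cancel₀ hne h1) h2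
  · intro z _
    exact (DifferentiableAt.prodMk (differentiableAt_fst.mul
      (((differentiableAt_const (1:ℂ)).add (differentiableAt_snd (𝕜 := ℂ) (E := ℂ) (F := ℂ))).pow 2))
      differentiableAt_snd).differentiableWithinAt
  · rw [(hasFDerivAt_F2 0).fderiv]
    refine ContinuousLinearMap.ext fun v => ?_
    simp [L2, Prod.ext_iff]
  · intro z hz
    rw [(hasFDerivAt_F2 z).fderiv]
    exact L2_isUnit z hz.2
  · intro z hz
    have hne := one_add_ne z.2 hz.2
    rw [(hasFDerivAt_F2 z).fderiv]
    simp only [L2, ContinuousLinearMap.prod_apply, ContinuousLinearMap.add_apply,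
      ContinuousLinearMap.smul_apply, ContinuousLinearMap.coe_fst', ContinuousLinearMap.coe_snd',
      smul_eq_mul, Prod.neg_mk, Prod.mk.injEq]
    constructor
    · field_simp
      ring
    · trivial
end
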